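/- For any λ ∈ P^B_{2n+1}, Φ^B(Φ̂^B(λ)) = λ; moreover, the posets Q_n^B and P^B_{2n+1} are isomorphic via the mutually inverse order-preserving maps Φ^B (restricted to Q_n^B) and Φ̂^B. -/
import Mathlib


open Finset

/-- Partial sum of the first `k` terms of a sequence of naturals. -/
def psum (π : ℕ → ℕ) (k : ℕ) : ℕ := ∑ i ∈ Finset.range k, π i

/-- A composition of `n`: almost all terms zero, summing to `n`. -/
def IsComposition (n : ℕ) (π : ℕ → ℕ) : Prop :=
  ∃ N, (∀ i, N ≤ i → π i = 0) ∧ psum π N = n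

/-- Dominance order: `l` dominates `π`. -/
def Dominates (l π : ℕ → ℕ) : Prop := ∀ k, psum π k ≤ psum l k

/-- A partition: weakly decreasing sequence. -/
def IsPartition (π : ℕ → ℕ) : Prop := ∀ i, π (i + 1) ≤ π i

/-- A quasi-partition: `π i ≥ π (i+2)` for all `i`. -/
def IsQuasiPartition (π : ℕ → ℕ) : Prop := ∀ i, π (i + 2) ≤ π i

/-- Interleaving of two sequences: `(ρ₁, σ₁, ρ₂, σ₂, …)` (0-indexed). -/
def interleave (ρ σ : ℕ → ℕ) (i : ℕ) : ℕ :=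
  if i % 2 = 0 then ρ (i / 2) else σ (i / 2)

/-- A bipartition of `n`: a pair of partitions whose interleaving sums to `n`. -/
def IsBipartition (n : ℕ) (ρ σ : ℕ → ℕ) : Prop :=
  IsPartition ρ ∧ IsPartition σ ∧ IsComposition n (interleave ρ σ)

/-- Interleaved dominance order on bipartitions: `(ρ;σ) ≤ (μ;ν)`. -/
def BiLE (ρ σ μ ν : ℕ → ℕ) : Prop :=
  Dominates (interleave μ ν) (interleave ρ σ)

/-- The map `Φ^C` on sequences: replace a consecutive pair `2s < 2t`
by `s+t, s+t` (pointwise description; replacements never overlap for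
quasi-partitions). -/
def phiC (π : ℕ → ℕ) : ℕ → ℕ
  | 0 => if π 0 < π 1 then (π 0 + π 1) / 2 else π 0
  | (j + 1) =>
      if π (j + 1) < π (j + 2) then (π (j + 1) + π (j + 2)) / 2
      else if π j < π (j + 1) then (π j + π (j + 1)) / 2
      else π (j + 1)

/-- `Φ^C` of a bipartition: apply `phiC` to the doubled interleaving. -/
def PhiC (ρ σ : ℕ → ℕ) : ℕ → ℕ := phiC (fun i => 2 * interleave ρ σ i)

/-- Membership in `P^C_{2n}`: partition of `2n` with every odd part of even
multiplicity. -/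
def IsPC (n : ℕ) (l : ℕ → ℕ) : Prop :=
  IsPartition l ∧ IsComposition (2 * n) l ∧
    ∀ a : ℕ, Odd a → Even ({i | l i = a}.ncard)

/-- C-distinguished: `μ i ≥ ν i - 1` and `ν i ≥ μ (i+1) - 1`. -/
def QC (μ ν : ℕ → ℕ) : Prop :=
  ∀ i, ν i ≤ μ i + 1 ∧ μ (i + 1) ≤ ν i + 1

/-- B-distinguished: `μ i ≥ ν i - 2` and `ν i ≥ μ (i+1)`. -/
def QB (μ ν : ℕ → ℕ) : Prop :=
  ∀ i, ν i ≤ μ i + 2 ∧ μ (i + 1) ≤ ν i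

/-- Special: `μ i ≥ ν i - 1` and `ν i ≥ μ (i+1)`. -/
def QS (μ ν : ℕ → ℕ) : Prop :=
  ∀ i, ν i ≤ μ i + 1 ∧ μ (i + 1) ≤ ν i

/-- The condition defining `Q_n^{B,2}`: `μ i ≥ ν i - 2`. -/
def QB2 (μ ν : ℕ → ℕ) : Prop := ∀ i, ν i ≤ μ i + 2

/-- For an antitone sequence, the starting index of the run of equal values
containing index `i`. -/
noncomputable def runStart (l : ℕ → ℕ) (i : ℕ) : ℕ := {j | l i < l j}.ncard

/-- The map `Φ̂^C`, pointwise: halve even parts; replace an (even-length)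
maximal run of an odd part `2k+1` with `k, k+1, k, k+1, …`. -/
noncomputable def hphiC (l : ℕ → ℕ) (i : ℕ) : ℕ :=
  if Even (l i) then l i / 2
  else if Even (i - runStart l i) then l i / 2 else l i / 2 + 1

/-- Partial sums of an integer sequence. -/
def zsum (π : ℕ → ℤ) (k : ℕ) : ℤ := ∑ i ∈ Finset.range k, π i

/-- Dominance order on integer sequences. -/
def ZDominates (l π : ℕ → ℤ) : Prop := ∀ k, zsum π k ≤ zsum l k

/-- The interleaved integer sequence `(2ρ₁+1, 2σ₁−1, 2ρ₂+1, 2σ₂−1, …)`. -/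
def interB (ρ σ : ℕ → ℕ) (i : ℕ) : ℤ :=
  if i % 2 = 0 then 2 * (ρ (i / 2) : ℤ) + 1 else 2 * (σ (i / 2) : ℤ) - 1

/-- The map `Φ^B` on integer sequences: replace a consecutive pair `s < t`
by `(s+t)/2, (s+t)/2` (pointwise description). -/
def phiB (π : ℕ → ℤ) : ℕ → ℤ
  | 0 => if π 0 < π 1 then (π 0 + π 1) / 2 else π 0
  | (j + 1) =>
      if π (j + 1) < π (j + 2) then (π (j + 1) + π (j + 2)) / 2
      else if π j < π (j + 1) then (π j + π (j + 1)) / 2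
      else π (j + 1)

/-- `Φ^B` of a bipartition. -/
def PhiB (ρ σ : ℕ → ℕ) : ℕ → ℤ := phiB (interB ρ σ)

/-- Membership in `P^B_{2n+1}` for an integer sequence: nonnegative, weakly
decreasing, summing to `2n+1`, with every (positive) even part of even
multiplicity. -/
def IsPB (n : ℕ) (l : ℕ → ℤ) : Prop :=
  (∀ i, 0 ≤ l i) ∧ (∀ i, l (i + 1) ≤ l i) ∧
  (∃ N, (∀ i, N ≤ i → l i = 0) ∧ zsum l N = 2 * n + 1) ∧
  ∀ a : ℤ, 0 < a → Even a → Even ({i | l i = a}.ncard)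

/-- Membership in `P^B_{2n+1}` for a natural-number partition. -/
def IsPBN (n : ℕ) (l : ℕ → ℕ) : Prop :=
  IsPartition l ∧ IsComposition (2 * n + 1) l ∧
    ∀ a : ℕ, 0 < a → Even a → Even ({i | l i = a}.ncard)

/-- The map `Φ̂^B`, pointwise (0-indexed, so the paper's index `i` is `j+1`):
an odd part `λ_i` becomes `(λ_i + (−1)^i)/2`; a maximal run of an even part
`2k` starting at (0-indexed) position `s` becomes `k, k, …` if `s` is odd
(paper's `i` even) and `k−1, k+1, k−1, k+1, …` if `s` is even (paper's `i`
odd). -/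
noncomputable def hphiB (l : ℕ → ℕ) (j : ℕ) : ℕ :=
  if Odd (l j) then (if Even j then (l j - 1) / 2 else (l j + 1) / 2)
  else
    if Odd (runStart l j) then l j / 2
    else if Even (j - runStart l j) then l j / 2 - 1 else l j / 2 + 1

/-- First component of the special closure `(ρ;σ)°`. -/
def scRho (ρ σ : ℕ → ℕ) : ℕ → ℕ
  | 0 => if ρ 0 + 1 < σ 0 then (ρ 0 + σ 0) / 2 else ρ 0
  | (i + 1) =>
      if ρ (i + 1) + 1 < σ (i + 1) then (ρ (i + 1) + σ (i + 1)) / 2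
      else if σ i < ρ (i + 1) then (σ i + ρ (i + 1)) / 2
      else ρ (i + 1)

/-- Second component of the special closure `(ρ;σ)°`. -/
def scSigma (ρ σ : ℕ → ℕ) (i : ℕ) : ℕ :=
  if ρ i + 1 < σ i then (ρ i + σ i + 1) / 2
  else if σ i < ρ (i + 1) then (σ i + ρ (i + 1) + 1) / 2
  else σ i

/-- First component of the closure `(ρ;σ)~` into `Q_n^{B,2}`. -/
def tRho (ρ σ : ℕ → ℕ) (i : ℕ) : ℕ :=
  if ρ i + 2 < σ i then (ρ i + σ i + 1) / 2 - 1 else ρ i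

/-- Second component of the closure `(ρ;σ)~` into `Q_n^{B,2}`. -/
def tSigma (ρ σ : ℕ → ℕ) (i : ℕ) : ℕ :=
  if ρ i + 2 < σ i then (ρ i + σ i) / 2 + 1 else σ i

/-- First component of the closure `(ρ;σ)^B` into `Q_n^B`. -/
def bRho (ρ σ : ℕ → ℕ) : ℕ → ℕ
  | 0 => if ρ 0 + 2 < σ 0 then (ρ 0 + σ 0 + 1) / 2 - 1 else ρ 0
  | (i + 1) =>
      if ρ (i + 1) + 2 < σ (i + 1) then (ρ (i + 1) + σ (i + 1) + 1) / 2 - 1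
      else if σ i < ρ (i + 1) then (σ i + ρ (i + 1)) / 2
      else ρ (i + 1)

/-- Second component of the closure `(ρ;σ)^B` into `Q_n^B`. -/
def bSigma (ρ σ : ℕ → ℕ) (i : ℕ) : ℕ :=
  if ρ i + 2 < σ i then (ρ i + σ i) / 2 + 1
  else if σ i < ρ (i + 1) then (σ i + ρ (i + 1) + 1) / 2
  else σ i

/-- First component of the closure `(ρ;σ)^C` into `Q_n^C`. -/
def cRho (ρ σ : ℕ → ℕ) : ℕ → ℕ
  | 0 => if ρ 0 + 1 < σ 0 then (ρ 0 + σ 0) / 2 else ρ 0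
  | (i + 1) =>
      if ρ (i + 1) + 1 < σ (i + 1) then (ρ (i + 1) + σ (i + 1)) / 2
      else if σ i + 1 < ρ (i + 1) then (σ i + ρ (i + 1) + 1) / 2
      else ρ (i + 1)

/-- Second component of the closure `(ρ;σ)^C` into `Q_n^C`. -/
def cSigma (ρ σ : ℕ → ℕ) (i : ℕ) : ℕ :=
  if ρ i + 1 < σ i then (ρ i + σ i + 1) / 2
  else if σ i + 1 < ρ (i + 1) then (σ i + ρ (i + 1)) / 2
  else σ i
/-! ### Auxiliary lemmas -/

lemma psum_succ (f : ℕ → ℕ) (k : ℕ) : psum f (k+1) = psum f k + f k :=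
  Finset.sum_range_succ f k

lemma zsum_succ (f : ℕ → ℤ) (k : ℕ) : zsum f (k+1) = zsum f k + f k :=
  Finset.sum_range_succ f k

lemma zsum_zero (f : ℕ → ℤ) : zsum f 0 = 0 := rfl

lemma psum_cast (f : ℕ → ℕ) (k : ℕ) :
    ((psum f k : ℤ)) = zsum (fun i => (f i : ℤ)) k := by
  induction k with
  | zero => rfl
  | succ k ih => rw [psum_succ, zsum_succ, ← ih]; push_cast; ring

lemma psum_congr {f g : ℕ → ℕ} (h : ∀ i, f i = g i) (k : ℕ) : psum f k = psum g k :=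
  Finset.sum_congr rfl (fun i _ => h i)

lemma psum_stable {f : ℕ → ℕ} {N : ℕ} (hN : ∀ i, N ≤ i → f i = 0) :
    ∀ k, N ≤ k → psum f k = psum f N := by
  intro k hk
  induction k with
  | zero =>
    have : N = 0 := by omega
    rw [this]
  | succ k ih =>
    rcases Nat.lt_or_ge N (k+1) with h | h
    · rw [psum_succ, hN k (by omega), ih (by omega), Nat.add_zero]
    · have : N = k + 1 := by omega
      rw [this]

/-- A lower (downward-closed) finset of naturals is an initial segment. -/
lemma lower_mem_iff_lt_card (T : Finset ℕ) (h : ∀ a b : ℕ, a ≤ b → b ∈ T → a ∈ T)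
    (j : ℕ) : j ∈ T ↔ j < T.card := by
  constructor
  · intro hj
    have hsub : Finset.range (j+1) ⊆ T := by
      intro a ha
      exact h a j (by simpa using Nat.lt_succ_iff.mp (Finset.mem_range.mp ha)) hj
    have := Finset.card_le_card hsub
    simp only [Finset.card_range] at this
    omega
  · intro hj
    by_contra hmem
    have hsub : T ⊆ Finset.range j := by
      intro b hb
      rcases Nat.lt_or_ge b j with h' | h'
      · exact Finset.mem_range.mpr h'
      · exact absurd (h j b h' hb) hmem
    have := Finset.card_le_card hsub
    simp only [Finset.card_range] at this
    omega

lemma lower_mem_iff_lt_ncard (S : Set ℕ) (hf : S.Finite)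
    (h : ∀ a b : ℕ, a ≤ b → b ∈ S → a ∈ S) (j : ℕ) : j ∈ S ↔ j < S.ncard := by
  rw [Set.ncard_eq_toFinset_card S hf]
  rw [← hf.mem_toFinset]
  exact lower_mem_iff_lt_card hf.toFinset
    (fun a b hab hb => hf.mem_toFinset.mpr (h a b hab (hf.mem_toFinset.mp hb))) j

section RunStart

variable {l : ℕ → ℕ} {N : ℕ}

lemma anti_of (hd : IsPartition l) : ∀ {i j : ℕ}, i ≤ j → l j ≤ l i := by
  intro i j hij
  exact antitone_nat_of_succ_le hd hij

lemma runStart_iff (hd : IsPartition l) (hN : ∀ i, N ≤ i → l i = 0) (i j : ℕ) :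
    l i < l j ↔ j < runStart l i := by
  have hf : {j | l i < l j}.Finite := by
    apply Set.Finite.subset (Set.finite_Iio N)
    intro j hj
    simp only [Set.mem_setOf_eq] at hj
    simp only [Set.mem_Iio]
    by_contra h
    rw [hN j (by omega)] at hj
    omega
  exact lower_mem_iff_lt_ncard _ hf
    (fun a b hab hb => lt_of_lt_of_le hb (anti_of hd hab)) j

lemma runStart_le (hd : IsPartition l) (hN : ∀ i, N ≤ i → l i = 0) (i : ℕ) :
    runStart l i ≤ i := by
  by_contra h
  have := (runStart_iff hd hN i i).mpr (by omega)
  omega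

lemma l_runStart (hd : IsPartition l) (hN : ∀ i, N ≤ i → l i = 0) (i : ℕ) :
    l (runStart l i) = l i := by
  have h1 : l (runStart l i) ≥ l i := anti_of hd (runStart_le hd hN i)
  have h2 : ¬ (l i < l (runStart l i)) := by
    intro h
    have := (runStart_iff hd hN i (runStart l i)).mp h
    omega
  omega

lemma runStart_congr {i j : ℕ} (h : l i = l j) : runStart l i = runStart l j := by
  unfold runStart; rw [h]

lemma run_mem (hd : IsPartition l) (hN : ∀ i, N ≤ i → l i = 0) {i j : ℕ}
    (h1 : runStart l i ≤ j) (h2 : j ≤ i) : l j = l i := by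
  have := anti_of hd h1
  have := anti_of hd h2
  have := l_runStart hd hN i
  omega

/-- The set of indices where an antitone, eventually-zero sequence takes a
positive value `a` is the interval `[runStart, b)`. -/
lemma run_interval (hd : IsPartition l) (hN : ∀ i, N ≤ i → l i = 0) (i : ℕ)
    (hpos : 0 < l i) :
    ∃ b, (∀ j, l j = l i ↔ runStart l i ≤ j ∧ j < b) ∧
      b - runStart l i = {j | l j = l i}.ncard := by
  have hf : {j | l i ≤ l j}.Finite := by
    apply Set.Finite.subset (Set.finite_Iio N)
    intro j hj
    simp only [Set.mem_setOf_eq] at hj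
    simp only [Set.mem_Iio]
    by_contra h
    rw [hN j (by omega)] at hj
    omega
  have hspec := lower_mem_iff_lt_ncard _ hf
    (fun a b hab hb => le_trans hb (anti_of hd hab))
  set b := {j | l i ≤ l j}.ncard with hb
  refine ⟨b, ?_, ?_⟩
  · intro j
    have h1 := hspec j
    have h2 := runStart_iff hd hN i j
    simp only [Set.mem_setOf_eq] at h1
    omega
  · have : {j | l j = l i} = ((Finset.Ico (runStart l i) b : Finset ℕ) : Set ℕ) := by
      ext j
      have h1 := hspec j
      have h2 := runStart_iff hd hN i j
      simp only [Set.mem_setOf_eq] at h1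
      simp only [Finset.coe_Ico, Set.mem_Ico, Set.mem_setOf_eq]
      omega
    rw [this, Set.ncard_coe_finset, Nat.card_Ico]

/-- The number of positive parts of a partition of an odd number with all
positive even parts of even multiplicity is odd. -/
lemma odd_npos (hd : IsPartition l) (hN : ∀ i, N ≤ i → l i = 0) {n : ℕ}
    (hsum : psum l N = 2 * n + 1)
    (hmult : ∀ a : ℕ, 0 < a → Even a → Even ({i | l i = a}.ncard)) :
    Odd ({i | 0 < l i}.ncard) := by
  classical
  have hset : {i | 0 < l i} = ((Finset.range N).filter (fun j => 0 < l j) : Finset ℕ) := by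
    ext j
    simp only [Set.mem_setOf_eq, Finset.coe_filter, Finset.mem_range, Set.mem_setOf_eq]
    constructor
    · intro h
      refine ⟨?_, h⟩
      by_contra hc
      rw [hN j (by omega)] at h; omega
    · exact fun h => h.2
  rw [hset, Set.ncard_coe_finset]
  -- split into odd-valued and even-valued positive indices
  have hcard : ((Finset.range N).filter (fun j => 0 < l j)).card
      = ((Finset.range N).filter (fun j => Odd (l j))).card
        + ((Finset.range N).filter (fun j => 0 < l j ∧ Even (l j))).card := by
    rw [← Finset.card_union_of_disjoint]
    · congr 1
      ext j
      simp only [Finset.mem_union, Finset.mem_filter, Finset.mem_range]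
      constructor
      · rintro ⟨hj, hpos⟩
        rcases Nat.even_or_odd (l j) with he | ho
        · exact Or.inr ⟨hj, hpos, he⟩
        · exact Or.inl ⟨hj, ho⟩
      · rintro (⟨hj, ho⟩ | ⟨hj, hpos, _⟩)
        · exact ⟨hj, by rcases ho with ⟨k, hk⟩; omega⟩
        · exact ⟨hj, hpos⟩
    · rw [Finset.disjoint_filter]
      rintro j _ ho ⟨_, he⟩
      rw [Nat.odd_iff] at ho
      rw [Nat.even_iff] at he
      omega
  rw [hcard]
  have hodd : Odd ((Finset.range N).filter (fun j => Odd (l j))).card := by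
    have key : ((((Finset.range N).filter (fun j => Odd (l j))).card : ℕ) : ZMod 2) = 1 := by
      have h1 : ((((Finset.range N).filter (fun j => Odd (l j))).card : ℕ) : ZMod 2)
          = ∑ j ∈ Finset.range N, ((l j : ℕ) : ZMod 2) := by
        rw [Finset.card_filter, Nat.cast_sum]
        apply Finset.sum_congr rfl
        intro j _
        by_cases h : Odd (l j)
        · have hm : l j % 2 = 1 := Nat.odd_iff.mp h
          rw [if_pos h, ← ZMod.natCast_mod (l j) 2, hm]
        · have hm : l j % 2 = 0 := Nat.even_iff.mp (Nat.not_odd_iff_even.mp h)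
          rw [if_neg h, ← ZMod.natCast_mod (l j) 2, hm]
      rw [h1, ← Nat.cast_sum]
      have hsum' : (∑ j ∈ Finset.range N, l j) = 2 * n + 1 := hsum
      have hm : (2 * n + 1) % 2 = 1 := by omega
      rw [hsum', ← ZMod.natCast_mod (2*n+1) 2, hm, Nat.cast_one]
    rw [Nat.odd_iff]
    by_contra hc
    have h0 : (((Finset.range N).filter (fun j => Odd (l j))).card) % 2 = 0 := by omega
    rw [← ZMod.natCast_mod, h0] at key
    simp at key
  have heven : Even ((Finset.range N).filter (fun j => 0 < l j ∧ Even (l j))).card := by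
    set T := (Finset.range N).filter (fun j => 0 < l j ∧ Even (l j)) with hT
    rw [Finset.card_eq_sum_card_image l T]
    rw [even_iff_two_dvd]
    apply Finset.dvd_sum
    intro a ha
    rw [Finset.mem_image] at ha
    obtain ⟨j, hj, hja⟩ := ha
    rw [hT, Finset.mem_filter] at hj
    obtain ⟨_, hpos, he⟩ := hj
    rw [← even_iff_two_dvd]
    have : (T.filter fun i => l i = a).card = {i | l i = a}.ncard := by
      have hset2 : {i | l i = a} = ((T.filter fun i => l i = a : Finset ℕ) : Set ℕ) := by
        ext i
        simp only [Set.mem_setOf_eq, Finset.coe_filter, Set.mem_setOf_eq, hT,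
          Finset.mem_filter, Finset.mem_range]
        constructor
        · intro h
          have hposi : 0 < l i := by omega
          refine ⟨⟨?_, ?_, ?_⟩, h⟩
          · by_contra hc
            rw [hN i (by omega)] at hposi; omega
          · omega
          · rw [h, ← hja]; exact he
        · exact fun h => h.2
      rw [hset2, Set.ncard_coe_finset]
    rw [this]
    exact hmult a (hja ▸ hpos) (hja ▸ he)
  obtain ⟨k1, hk1⟩ := hodd
  obtain ⟨k2, hk2⟩ := heven
  exact ⟨k1 + k2, by omega⟩

end RunStart
section PhiBAbstract

variable {π : ℕ → ℤ}

/-- Structural hypotheses satisfied by `interB` of a B-distinguished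
bipartition, and by the doubled-halved image of a `P^B` partition. -/
def GoodSeq (π : ℕ → ℤ) : Prop :=
  (∀ j, π j % 2 = 1) ∧ (∀ j, π (j+1) ≤ π j + 2) ∧ (∀ j, π (j+2) ≤ π j)

lemma GoodSeq.step (h : GoodSeq π) {j : ℕ} (hlt : π j < π (j+1)) :
    π (j+1) = π j + 2 := by
  have h1 := h.1 j
  have h2 := h.1 (j+1)
  have h3 := h.2.1 j
  omega

lemma GoodSeq.no_adj (h : GoodSeq π) {j : ℕ} (hlt : π j < π (j+1)) :
    ¬ π (j+1) < π (j+2) := by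
  intro hlt2
  have := h.step hlt
  have := h.step hlt2
  have := h.2.2 j
  omega

lemma phiB_zero (π : ℕ → ℤ) : phiB π 0 = if π 0 < π 1 then (π 0 + π 1) / 2 else π 0 := rfl

lemma phiB_succ (π : ℕ → ℤ) (j : ℕ) : phiB π (j+1) =
    if π (j + 1) < π (j + 2) then (π (j + 1) + π (j + 2)) / 2
      else if π j < π (j + 1) then (π j + π (j + 1)) / 2
      else π (j + 1) := rfl

lemma half_step {a b : ℤ} (h : b = a + 2) : (a + b) / 2 = a + 1 := by
  have : a + b = 2 * (a + 1) := by omega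
  rw [this, Int.mul_ediv_cancel_left _ two_ne_zero]

lemma GoodSeq.val0 (h : GoodSeq π) :
    phiB π 0 = if π 0 < π 1 then π 0 + 1 else π 0 := by
  rw [phiB_zero]
  by_cases hlt : π 0 < π 1
  · rw [if_pos hlt, if_pos hlt, half_step (h.step hlt)]
  · rw [if_neg hlt, if_neg hlt]

lemma GoodSeq.val (h : GoodSeq π) (j : ℕ) :
    phiB π (j+1) = if π (j+1) < π (j+2) then π (j+1) + 1
      else if π j < π (j+1) then π (j+1) - 1 else π (j+1) := by
  rw [phiB_succ]
  by_cases hlt : π (j+1) < π (j+2)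
  · rw [if_pos hlt, if_pos hlt, half_step (h.step hlt)]
  · rw [if_neg hlt, if_neg hlt]
    by_cases hlt2 : π j < π (j+1)
    · rw [if_pos hlt2, if_pos hlt2, half_step (h.step hlt2)]
      have := h.step hlt2
      omega
    · rw [if_neg hlt2, if_neg hlt2]

lemma GoodSeq.zsum_phiB (h : GoodSeq π) (k : ℕ) :
    zsum (phiB π) (k+1) = zsum π (k+1) + (if π k < π (k+1) then 1 else 0) := by
  induction k with
  | zero =>
    rw [zsum_succ, zsum_succ, zsum_zero, zsum_zero, h.val0]
    by_cases hlt : π 0 < π 1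
    · rw [if_pos hlt, if_pos hlt]; ring
    · rw [if_neg hlt, if_neg hlt]; ring
  | succ k ih =>
    rw [zsum_succ, ih, h.val k, zsum_succ (π) (k+1)]
    by_cases hlt : π (k+1) < π (k+2)
    · have hn : ¬ π k < π (k+1) := fun hc => h.no_adj hc hlt
      rw [if_pos hlt, if_pos hlt, if_neg hn]
      ring
    · rw [if_neg hlt, if_neg hlt]
      by_cases hlt2 : π k < π (k+1)
      · rw [if_pos hlt2, if_pos hlt2]; ring
      · rw [if_neg hlt2, if_neg hlt2]; ring

lemma GoodSeq.zsum_parity (h : GoodSeq π) (k : ℕ) : zsum π k % 2 = k % 2 := by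
  induction k with
  | zero => rfl
  | succ k ih =>
    rw [zsum_succ]
    have := h.1 k
    omega

/-- `Φ^B` preserves and reflects dominance between `GoodSeq` sequences. -/
lemma dom_iff {π π' : ℕ → ℤ} (h : GoodSeq π) (h' : GoodSeq π') :
    ZDominates π' π ↔ ZDominates (phiB π') (phiB π) := by
  constructor
  · intro hd k
    match k with
    | 0 => exact le_refl 0
    | (k+1) =>
      rw [h.zsum_phiB k, h'.zsum_phiB k]
      have e1 : zsum π (k+1) = zsum π k + π k := zsum_succ π k
      have e2 : zsum π (k+2) = zsum π (k+1) + π (k+1) := zsum_succ π (k+1)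
      have e3 : zsum π' (k+1) = zsum π' k + π' k := zsum_succ π' k
      have e4 : zsum π' (k+2) = zsum π' (k+1) + π' (k+1) := zsum_succ π' (k+1)
      have d1 := hd k
      have d2 := hd (k+1)
      have d3 := hd (k+2)
      by_cases c1 : π k < π (k+1) <;> by_cases c2 : π' k < π' (k+1) <;>
        simp only [c1, c2, if_true, if_false] <;> omega
  · intro hd k
    match k with
    | 0 => exact le_refl 0
    | (k+1) =>
      have hds := hd (k+1)
      rw [h.zsum_phiB k, h'.zsum_phiB k] at hds
      have p1 := h.zsum_parity (k+1)
      have p2 := h'.zsum_parity (k+1)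
      by_cases c1 : π k < π (k+1) <;> by_cases c2 : π' k < π' (k+1) <;>
        simp only [c1, c2, if_true, if_false] at hds <;> omega

end PhiBAbstract

section InterB

lemma interB_eval (ρ σ : ℕ → ℕ) (j : ℕ) :
    interB ρ σ j = 2 * (interleave ρ σ j : ℤ) + (if j % 2 = 0 then 1 else -1) := by
  unfold interB interleave
  by_cases h : j % 2 = 0
  · rw [if_pos h, if_pos h, if_pos h]
  · rw [if_neg h, if_neg h, if_neg h]
    push_cast
    ring

lemma zsum_interB (ρ σ : ℕ → ℕ) (k : ℕ) :
    zsum (interB ρ σ) k = 2 * (psum (interleave ρ σ) k : ℤ) + (k % 2 : ℕ) := by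
  induction k with
  | zero => rfl
  | succ k ih =>
    rw [zsum_succ, ih, psum_succ, interB_eval]
    have : k % 2 = 0 ∨ k % 2 = 1 := by omega
    rcases this with h | h
    · rw [if_pos h]
      have h2 : (k+1) % 2 = 1 := by omega
      rw [h, h2]
      push_cast
      ring
    · rw [if_neg (by omega)]
      have h2 : (k+1) % 2 = 0 := by omega
      rw [h, h2]
      push_cast
      ring

/-- The interleaving bridge: dominance of interleavings is equivalent to
integer dominance of the shifted interleavings. -/
lemma bile_iff_zdom (ρ σ μ ν : ℕ → ℕ) :
    BiLE ρ σ μ ν ↔ ZDominates (interB μ ν) (interB ρ σ) := by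
  constructor
  · intro hb k
    rw [zsum_interB, zsum_interB]
    have := hb k
    omega
  · intro hz k
    have := hz k
    rw [zsum_interB, zsum_interB] at this
    have h2 : (psum (interleave ρ σ) k : ℤ) ≤ (psum (interleave μ ν) k : ℤ) := by omega
    exact_mod_cast h2

/-- `interB` of a B-distinguished bipartition is a `GoodSeq`. -/
lemma goodSeq_interB {ρ σ : ℕ → ℕ} (hρ : IsPartition ρ) (hσ : IsPartition σ)
    (hq : QB ρ σ) : GoodSeq (interB ρ σ) := by
  have hmod : ∀ j : ℕ, j % 2 = 0 → (j+1) % 2 = 1 ∧ (j+1)/2 = j/2 := by omega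
  have hmod2 : ∀ j : ℕ, j % 2 = 1 → (j+1) % 2 = 0 ∧ (j+1)/2 = j/2 + 1 := by omega
  refine ⟨fun j => ?_, fun j => ?_, fun j => ?_⟩
  · unfold interB
    by_cases h : j % 2 = 0
    · rw [if_pos h]; omega
    · rw [if_neg h]; omega
  · unfold interB
    by_cases h : j % 2 = 0
    · obtain ⟨h1, h2⟩ := hmod j h
      rw [if_pos h, if_neg (by omega), h2]
      have := (hq (j/2)).1
      omega
    · have h' : j % 2 = 1 := by omega
      obtain ⟨h1, h2⟩ := hmod2 j h'
      rw [if_neg h, if_pos (by omega), h2]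
      have := (hq (j/2)).2
      omega
  · unfold interB
    have h2 : (j+2) % 2 = j % 2 := by omega
    have h3 : (j+2) / 2 = j / 2 + 1 := by omega
    by_cases h : j % 2 = 0
    · rw [if_pos h, if_pos (by omega), h3]
      have := hρ (j/2)
      omega
    · rw [if_neg h, if_neg (by omega), h3]
      have := hσ (j/2)
      omega

end InterB
section BSide

/-- The shifted doubled interleaving of `Φ̂^B l`. -/
noncomputable def piB (l : ℕ → ℕ) : ℕ → ℤ :=
  interB (fun j => hphiB l (2 * j)) (fun j => hphiB l (2 * j + 1))

lemma zsum_congr {f g : ℕ → ℤ} (h : ∀ i, f i = g i) (k : ℕ) : zsum f k = zsum g k :=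
  Finset.sum_congr rfl (fun i _ => h i)

lemma piB_eq (l : ℕ → ℕ) (j : ℕ) :
    piB l j = 2 * (hphiB l j : ℤ) + (if j % 2 = 0 then 1 else -1) := by
  unfold piB interB
  by_cases h : j % 2 = 0
  · rw [if_pos h, if_pos h]
    simp only
    have h2 : 2 * (j/2) = j := by omega
    rw [h2]
  · rw [if_neg h, if_neg h]
    simp only
    have h2 : 2 * (j/2) + 1 = j := by omega
    rw [h2]
    ring

variable {l : ℕ → ℕ} {N n : ℕ}

lemma odd_runStart_zero (hd : IsPartition l) (hN : ∀ i, N ≤ i → l i = 0)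
    (hsum : psum l N = 2 * n + 1)
    (hmult : ∀ a : ℕ, 0 < a → Even a → Even ({i | l i = a}.ncard))
    {j : ℕ} (h0 : l j = 0) : Odd (runStart l j) := by
  have h1 : runStart l j = {i | 0 < l i}.ncard := by
    unfold runStart; rw [h0]
  rw [h1]
  exact odd_npos hd hN hsum hmult

lemma run_ext (hd : IsPartition l) (hN : ∀ i, N ≤ i → l i = 0)
    (hmult : ∀ a : ℕ, 0 < a → Even a → Even ({i | l i = a}.ncard))
    {j : ℕ} (he : Even (l j)) (hp : Even (j - runStart l j)) : l (j+1) = l j := by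
  by_cases h0 : l j = 0
  · have := hd j
    omega
  · obtain ⟨b, hb, hcard⟩ := run_interval hd hN j (by omega)
    have hmu := hmult (l j) (by omega) he
    rw [← hcard] at hmu
    have hj := (hb j).mp rfl
    apply (hb (j+1)).mpr
    rw [Nat.even_iff] at he hp hmu
    omega

/-- Trichotomy for the values of `piB`. -/
lemma pi_cases (hd : IsPartition l) (hN : ∀ i, N ≤ i → l i = 0)
    (hsum : psum l N = 2 * n + 1)
    (hmult : ∀ a : ℕ, 0 < a → Even a → Even ({i | l i = a}.ncard)) (j : ℕ) :
    (l j % 2 = 1 ∧ piB l j = l j) ∨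
    (l j % 2 = 0 ∧ (j - runStart l j) % 2 = 0 ∧ piB l j = (l j : ℤ) - 1) ∨
    (l j % 2 = 0 ∧ (j - runStart l j) % 2 = 1 ∧ piB l j = (l j : ℤ) + 1) := by
  have hle := runStart_le hd hN j
  rw [piB_eq]
  unfold hphiB
  by_cases ho : Odd (l j)
  · left
    refine ⟨Nat.odd_iff.mp ho, ?_⟩
    rw [if_pos ho]
    have hm := Nat.odd_iff.mp ho
    by_cases hj : Even j
    · have hj2 : j % 2 = 0 := Nat.even_iff.mp hj
      rw [if_pos hj, if_pos hj2]
      omega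
    · have hj2 : j % 2 = 1 := Nat.odd_iff.mp (Nat.not_even_iff_odd.mp hj)
      rw [if_neg hj, if_neg (by omega)]
      omega
  · have he : Even (l j) := Nat.not_odd_iff_even.mp ho
    have hm := Nat.even_iff.mp he
    rw [if_neg ho]
    by_cases hrs : Odd (runStart l j)
    · have hrs2 := Nat.odd_iff.mp hrs
      rw [if_pos hrs]
      by_cases hp : (j - runStart l j) % 2 = 0
      · right; left
        have hj2 : j % 2 = 1 := by omega
        refine ⟨hm, hp, ?_⟩
        rw [if_neg (by omega)]
        omega
      · right; right
        have hj2 : j % 2 = 0 := by omega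
        refine ⟨hm, by omega, ?_⟩
        rw [if_pos hj2]
        omega
    · have hnz : l j ≠ 0 := fun h0 => hrs (odd_runStart_zero hd hN hsum hmult h0)
      have hrs2 := Nat.even_iff.mp (Nat.not_odd_iff_even.mp hrs)
      rw [if_neg hrs]
      by_cases hp : (j - runStart l j) % 2 = 0
      · right; left
        have hj2 : j % 2 = 0 := by omega
        refine ⟨hm, hp, ?_⟩
        rw [if_pos (Nat.even_iff.mpr hp), if_pos hj2]
        omega
      · right; right
        have hj2 : j % 2 = 1 := by omega
        refine ⟨hm, by omega, ?_⟩
        rw [if_neg (fun hc => hp (Nat.even_iff.mp hc)), if_neg (by omega)]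
        omega

end BSide
section BSide2

variable {l : ℕ → ℕ} {N n : ℕ}

/-- Bundled hypotheses for the B-side. -/
structure PBData (l : ℕ → ℕ) (N n : ℕ) : Prop where
  hd : IsPartition l
  hN : ∀ i, N ≤ i → l i = 0
  hsum : psum l N = 2 * n + 1
  hmult : ∀ a : ℕ, 0 < a → Even a → Even ({i | l i = a}.ncard)

lemma PBData.cases (H : PBData l N n) (j : ℕ) :
    (l j % 2 = 1 ∧ piB l j = l j) ∨
    (l j % 2 = 0 ∧ (j - runStart l j) % 2 = 0 ∧ piB l j = (l j : ℤ) - 1) ∨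
    (l j % 2 = 0 ∧ (j - runStart l j) % 2 = 1 ∧ piB l j = (l j : ℤ) + 1) :=
  pi_cases H.hd H.hN H.hsum H.hmult j

lemma PBData.good (H : PBData l N n) : GoodSeq (piB l) := by
  refine ⟨fun j => ?_, fun j => ?_, fun j => ?_⟩
  · rcases H.cases j with ⟨h1, h2⟩ | ⟨h1, _, h2⟩ | ⟨h1, _, h2⟩ <;> omega
  · have hmono := H.hd j
    rcases H.cases j with ⟨h1, h2⟩ | ⟨h1, _, h2⟩ | ⟨h1, _, h2⟩ <;>
      rcases H.cases (j+1) with ⟨g1, g2⟩ | ⟨g1, _, g2⟩ | ⟨g1, _, g2⟩ <;> omega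
  · have hm1 := H.hd j
    have hm2 : l (j+2) ≤ l (j+1) := H.hd (j+1)
    by_cases heq : l (j+2) = l j
    · have hc : runStart l (j+2) = runStart l j := runStart_congr heq
      have hle1 : runStart l j ≤ j := runStart_le H.hd H.hN j
      rcases H.cases j with ⟨h1, h2⟩ | ⟨h1, hp1, h2⟩ | ⟨h1, hp1, h2⟩ <;>
        rcases H.cases (j+2) with ⟨g1, g2⟩ | ⟨g1, gp1, g2⟩ | ⟨g1, gp1, g2⟩ <;>
        rw [hc] at * <;> omega
    · rcases H.cases j with ⟨h1, h2⟩ | ⟨h1, _, h2⟩ | ⟨h1, _, h2⟩ <;>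
        rcases H.cases (j+2) with ⟨g1, g2⟩ | ⟨g1, _, g2⟩ | ⟨g1, _, g2⟩ <;> omega

/-- Characterization of the increases of `piB`. -/
lemma PBData.incA (H : PBData l N n) (j : ℕ) :
    piB l j < piB l (j+1) ↔ (l j % 2 = 0 ∧ (j - runStart l j) % 2 = 0) := by
  have hmono := H.hd j
  have hle1 : runStart l j ≤ j := runStart_le H.hd H.hN j
  constructor
  · intro hlt
    rcases H.cases j with ⟨h1, h2⟩ | ⟨h1, hp1, h2⟩ | ⟨h1, hp1, h2⟩ <;>
      rcases H.cases (j+1) with ⟨g1, g2⟩ | ⟨g1, gp1, g2⟩ | ⟨g1, gp1, g2⟩ <;> omega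
  · rintro ⟨h1, h2⟩
    have hext : l (j+1) = l j :=
      run_ext H.hd H.hN H.hmult (Nat.even_iff.mpr h1) (Nat.even_iff.mpr h2)
    have hc : runStart l (j+1) = runStart l j := runStart_congr hext
    have h2' : (j + 1 - runStart l (j+1)) % 2 = 1 := by rw [hc]; omega
    rcases H.cases j with ⟨g1, g2⟩ | ⟨g1, gp1, g2⟩ | ⟨g1, gp1, g2⟩ <;>
      rcases H.cases (j+1) with ⟨f1, f2⟩ | ⟨f1, fp1, f2⟩ | ⟨f1, fp1, f2⟩ <;> omega

/-- Part 1: `Φ^B ∘ Φ̂^B = id` on `P^B_{2n+1}`. -/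
lemma PBData.part1 (H : PBData l N n) (i : ℕ) : phiB (piB l) i = (l i : ℤ) := by
  have hg := H.good
  match i with
  | 0 =>
    rw [hg.val0]
    have hle : runStart l 0 ≤ 0 := runStart_le H.hd H.hN 0
    by_cases h : piB l 0 < piB l 1
    · rw [if_pos h]
      have hA := (H.incA 0).mp h
      rcases H.cases 0 with ⟨h1, h2⟩ | ⟨h1, hp1, h2⟩ | ⟨h1, hp1, h2⟩ <;> omega
    · rw [if_neg h]
      have hA : ¬ (l 0 % 2 = 0 ∧ (0 - runStart l 0) % 2 = 0) :=
        fun hc => h ((H.incA 0).mpr hc)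
      rcases H.cases 0 with ⟨h1, h2⟩ | ⟨h1, hp1, h2⟩ | ⟨h1, hp1, h2⟩ <;> omega
  | (j+1) =>
    rw [hg.val j]
    by_cases h2 : piB l (j+1) < piB l (j+2)
    · rw [if_pos h2]
      have hA := (H.incA (j+1)).mp h2
      rcases H.cases (j+1) with ⟨h1, hv⟩ | ⟨h1, hp1, hv⟩ | ⟨h1, hp1, hv⟩ <;> omega
    · rw [if_neg h2]
      by_cases h1 : piB l j < piB l (j+1)
      · rw [if_pos h1]
        have hA := (H.incA j).mp h1
        have hext : l (j+1) = l j :=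
          run_ext H.hd H.hN H.hmult (Nat.even_iff.mpr hA.1) (Nat.even_iff.mpr hA.2)
        have hc : runStart l (j+1) = runStart l j := runStart_congr hext
        have hle1 : runStart l j ≤ j := runStart_le H.hd H.hN j
        rcases H.cases (j+1) with ⟨f1, f2⟩ | ⟨f1, fp1, f2⟩ | ⟨f1, fp1, f2⟩ <;>
          rw [hc] at * <;> omega
      · rw [if_neg h1]
        rcases H.cases (j+1) with ⟨f1, f2⟩ | ⟨f1, fp1, f2⟩ | ⟨f1, fp1, f2⟩
        · exact f2
        · exact absurd ((H.incA (j+1)).mpr ⟨f1, fp1⟩) h2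
        · -- l (j+1) even, odd offset in its run: then the increase is at (j, j+1)
          have hle1 : runStart l (j+1) ≤ j + 1 := runStart_le H.hd H.hN (j+1)
          have hslt : runStart l (j+1) ≤ j := by omega
          have heq : l j = l (j+1) := run_mem H.hd H.hN hslt (by omega)
          have hc : runStart l j = runStart l (j+1) := runStart_congr heq
          have : piB l j < piB l (j+1) := by
            apply (H.incA j).mpr
            constructor
            · omega
            · rw [hc]; omega
          exact absurd this h1

end BSide2
section BSide3

variable {l : ℕ → ℕ} {N n : ℕ}

lemma PBData.hphi_zero (H : PBData l N n) {j : ℕ} (hj : N ≤ j) : hphiB l j = 0 := by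
  have h0 : l j = 0 := H.hN j hj
  have hodd : Odd (runStart l j) := odd_runStart_zero H.hd H.hN H.hsum H.hmult h0
  unfold hphiB
  rw [if_neg (by rw [h0]; exact (by decide : ¬ Odd 0)), if_pos hodd, h0]

lemma PBData.part3 (H : PBData l N n) :
    IsBipartition n (fun j => hphiB l (2 * j)) (fun j => hphiB l (2 * j + 1)) ∧
    QB (fun j => hphiB l (2 * j)) (fun j => hphiB l (2 * j + 1)) := by
  have hg := H.good
  have hpi : ∀ j, piB l j = 2 * (hphiB l j : ℤ) + (if j % 2 = 0 then 1 else -1) :=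
    piB_eq l
  constructor
  · refine ⟨fun i => ?_, fun i => ?_, ?_⟩
    · -- ρ is a partition
      have hq : piB l (2 * i + 2) ≤ piB l (2 * i) := hg.2.2 (2 * i)
      have e1 := hpi (2 * i)
      have e2 := hpi (2 * i + 2)
      rw [if_pos (by omega : (2 * i) % 2 = 0)] at e1
      rw [if_pos (by omega : (2 * i + 2) % 2 = 0)] at e2
      show hphiB l (2 * (i + 1)) ≤ hphiB l (2 * i)
      rw [(by omega : 2 * (i + 1) = 2 * i + 2)]
      omega
    · -- σ is a partition
      have hq : piB l (2 * i + 3) ≤ piB l (2 * i + 1) := hg.2.2 (2 * i + 1)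
      have e1 := hpi (2 * i + 1)
      have e2 := hpi (2 * i + 3)
      rw [if_neg (by omega : ¬ (2 * i + 1) % 2 = 0)] at e1
      rw [if_neg (by omega : ¬ (2 * i + 3) % 2 = 0)] at e2
      show hphiB l (2 * (i + 1) + 1) ≤ hphiB l (2 * i + 1)
      rw [(by omega : 2 * (i + 1) + 1 = 2 * i + 3)]
      omega
    · -- composition
      have hIlv : ∀ i, interleave (fun j => hphiB l (2 * j)) (fun j => hphiB l (2 * j + 1)) i
          = hphiB l i := by
        intro i
        unfold interleave
        by_cases h : i % 2 = 0
        · rw [if_pos h]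
          show hphiB l (2 * (i / 2)) = hphiB l i
          rw [(by omega : 2 * (i / 2) = i)]
        · rw [if_neg h]
          show hphiB l (2 * (i / 2) + 1) = hphiB l i
          rw [(by omega : 2 * (i / 2) + 1 = i)]
      refine ⟨2 * N + 2, fun i hi => ?_, ?_⟩
      · rw [hIlv i]
        exact H.hphi_zero (by omega)
      · -- the partial sum equals n
        have hz1 : zsum (phiB (piB l)) (2 * N + 2)
            = zsum (piB l) (2 * N + 2) + 1 := by
          rw [hg.zsum_phiB (2 * N + 1)]
          have e1 := hpi (2 * N + 1)
          have e2 := hpi (2 * N + 2)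
          have z1 : hphiB l (2 * N + 1) = 0 := H.hphi_zero (by omega)
          have z2 : hphiB l (2 * N + 2) = 0 := H.hphi_zero (by omega)
          rw [if_neg (by omega)] at e1
          rw [if_pos (by omega)] at e2
          rw [if_pos (by omega : piB l (2*N+1) < piB l (2*N+2))]
        have hz2 : zsum (phiB (piB l)) (2 * N + 2) = 2 * n + 1 := by
          rw [zsum_congr (H.part1) (2 * N + 2), ← psum_cast]
          rw [psum_stable H.hN (2 * N + 2) (by omega), H.hsum]
          push_cast; ring
        have hz3 : zsum (piB l) (2 * N + 2)
            = 2 * (psum (interleave (fun j => hphiB l (2 * j)) (fun j => hphiB l (2 * j + 1))) (2 * N + 2) : ℤ)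
              + ((2 * N + 2) % 2 : ℕ) := zsum_interB _ _ _
        have hmod : (2 * N + 2) % 2 = 0 := by omega
        rw [hmod] at hz3
        have : (psum (interleave (fun j => hphiB l (2 * j)) (fun j => hphiB l (2 * j + 1))) (2 * N + 2) : ℤ) = n := by
          omega
        exact_mod_cast this
  · -- QB
    intro i
    constructor
    · have hq : piB l (2 * i + 1) ≤ piB l (2 * i) + 2 := hg.2.1 (2 * i)
      have e1 := hpi (2 * i)
      have e2 := hpi (2 * i + 1)
      rw [if_pos (by omega : (2 * i) % 2 = 0)] at e1
      rw [if_neg (by omega : ¬ (2 * i + 1) % 2 = 0)] at e2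
      show hphiB l (2 * i + 1) ≤ hphiB l (2 * i) + 2
      omega
    · have hq : piB l (2 * i + 2) ≤ piB l (2 * i + 1) + 2 := hg.2.1 (2 * i + 1)
      have e1 := hpi (2 * i + 1)
      have e2 := hpi (2 * i + 2)
      rw [if_neg (by omega : ¬ (2 * i + 1) % 2 = 0)] at e1
      rw [if_pos (by omega : (2 * i + 2) % 2 = 0)] at e2
      show hphiB l (2 * (i + 1)) ≤ hphiB l (2 * i + 1)
      rw [(by omega : 2 * (i + 1) = 2 * i + 2)]
      omega

end BSide3
section ASide

variable {ρ σ : ℕ → ℕ} {n N3 : ℕ}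

/-- Bundled hypotheses for the A-side. -/
structure AData (ρ σ : ℕ → ℕ) (n N3 : ℕ) : Prop where
  hρ : IsPartition ρ
  hσ : IsPartition σ
  hq : QB ρ σ
  hN3 : ∀ i, N3 ≤ i → interleave ρ σ i = 0
  hps : psum (interleave ρ σ) N3 = n

lemma AData.good (H : AData ρ σ n N3) : GoodSeq (interB ρ σ) :=
  goodSeq_interB H.hρ H.hσ H.hq

lemma AData.lb (H : AData ρ σ n N3) (j : ℕ) :
    (if j % 2 = 0 then (1:ℤ) else -1) ≤ interB ρ σ j := by
  rw [interB_eval]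
  by_cases h : j % 2 = 0
  · rw [if_pos h]; omega
  · rw [if_neg h]; omega

lemma AData.tail (H : AData ρ σ n N3) {j : ℕ} (hj : N3 ≤ j) :
    interB ρ σ j = (if j % 2 = 0 then (1:ℤ) else -1) := by
  rw [interB_eval, H.hN3 j hj]
  push_cast
  ring

lemma AData.nonneg (H : AData ρ σ n N3) (j : ℕ) : 0 ≤ phiB (interB ρ σ) j := by
  have hg := H.good
  match j with
  | 0 =>
    rw [hg.val0]
    have h5 := H.lb 0
    rw [if_pos (by omega : (0:ℕ) % 2 = 0)] at h5
    split_ifs <;> omega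
  | (i+1) =>
    rw [hg.val i]
    have h5 := H.lb (i+1)
    have h6 := H.lb (i+2)
    by_cases hp : (i+1) % 2 = 0
    · rw [if_pos hp] at h5
      split_ifs <;> omega
    · rw [if_neg hp] at h5
      rw [if_pos (by omega : (i+2) % 2 = 0)] at h6
      split_ifs <;> omega

lemma AData.anti (H : AData ρ σ n N3) (j : ℕ) :
    phiB (interB ρ σ) (j+1) ≤ phiB (interB ρ σ) j := by
  have hg := H.good
  set π := interB ρ σ with hπ
  match j with
  | 0 =>
    rw [hg.val0, hg.val 0]
    have p0 := hg.1 0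
    have p1 := hg.1 1
    have p2 := hg.1 2
    have b1 := hg.2.1 0
    have b2 := hg.2.1 1
    have q0 := hg.2.2 0
    split_ifs <;> omega
  | (i+1) =>
    rw [hg.val i, hg.val (i+1)]
    have e1 : i+1+1 = i+2 := rfl
    have e2 : i+1+2 = i+3 := rfl
    rw [e1, e2]
    have p0 := hg.1 i
    have p1 := hg.1 (i+1)
    have p2 := hg.1 (i+2)
    have p3 := hg.1 (i+3)
    have b1 : π (i+1) ≤ π i + 2 := hg.2.1 i
    have b2 : π (i+2) ≤ π (i+1) + 2 := hg.2.1 (i+1)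
    have b3 : π (i+3) ≤ π (i+2) + 2 := hg.2.1 (i+2)
    have q0 : π (i+2) ≤ π i := hg.2.2 i
    have q1 : π (i+3) ≤ π (i+1) := hg.2.2 (i+1)
    split_ifs <;> omega

lemma AData.tail_zero (H : AData ρ σ n N3) {j : ℕ} (hj : N3 + 1 ≤ j) :
    phiB (interB ρ σ) j = 0 := by
  have hg := H.good
  match j, hj with
  | (i+1), hj =>
    rw [hg.val i]
    have t1 := H.tail (show N3 ≤ i by omega)
    have t2 := H.tail (show N3 ≤ i+1 by omega)
    have t3 := H.tail (show N3 ≤ i+2 by omega)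
    have : i % 2 = 0 ∨ i % 2 = 1 := by omega
    rcases this with h | h
    · rw [if_pos h] at t1
      rw [if_neg (by omega : ¬ (i+1) % 2 = 0)] at t2
      rw [if_pos (by omega : (i+2) % 2 = 0)] at t3
      split_ifs <;> omega
    · rw [if_neg (by omega : ¬ i % 2 = 0)] at t1
      rw [if_pos (by omega : (i+1) % 2 = 0)] at t2
      rw [if_neg (by omega : ¬ (i+2) % 2 = 0)] at t3
      split_ifs <;> omega

lemma AData.sum (H : AData ρ σ n N3) :
    zsum (phiB (interB ρ σ)) (2 * N3 + 2) = 2 * n + 1 := by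
  have hg := H.good
  rw [hg.zsum_phiB (2 * N3 + 1)]
  have t1 := H.tail (show N3 ≤ 2*N3+1 by omega)
  have t2 := H.tail (show N3 ≤ 2*N3+2 by omega)
  rw [if_neg (by omega : ¬ (2*N3+1) % 2 = 0)] at t1
  rw [if_pos (by omega : (2*N3+2) % 2 = 0)] at t2
  have hz := zsum_interB ρ σ (2 * N3 + 2)
  have hst : psum (interleave ρ σ) (2 * N3 + 2) = n := by
    rw [psum_stable H.hN3 (2 * N3 + 2) (by omega), H.hps]
  rw [hst] at hz
  rw [if_pos (show interB ρ σ (2*N3+1) < interB ρ σ (2*N3+1+1) by rw [t1]; rw [(rfl : 2*N3+1+1 = 2*N3+2)] at *; omega)]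
  rw [(rfl : 2*N3+1+1 = 2*N3+2)]
  rw [hz]
  have : ((2*N3+2) % 2 : ℕ) = 0 := by omega
  rw [this]
  push_cast
  ring

/-- Merged-value lemma: an even value of `phiB` comes from a merge. -/
lemma AData.merged (H : AData ρ σ n N3) {j : ℕ} (he : phiB (interB ρ σ) j % 2 = 0) :
    (interB ρ σ j < interB ρ σ (j+1) ∧ phiB (interB ρ σ) j = interB ρ σ j + 1) ∨
    (∃ i, j = i + 1 ∧ interB ρ σ i < interB ρ σ (i+1) ∧
      ¬ interB ρ σ (i+1) < interB ρ σ (i+2) ∧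
      phiB (interB ρ σ) j = interB ρ σ j - 1) := by
  have hg := H.good
  match j with
  | 0 =>
    rw [hg.val0] at he ⊢
    have p0 := hg.1 0
    by_cases hc : interB ρ σ 0 < interB ρ σ 1
    · rw [if_pos hc] at he ⊢
      exact Or.inl ⟨hc, rfl⟩
    · rw [if_neg hc] at he
      omega
  | (i+1) =>
    rw [hg.val i] at he ⊢
    have p1 := hg.1 (i+1)
    by_cases hc1 : interB ρ σ (i+1) < interB ρ σ (i+2)
    · rw [if_pos hc1] at he ⊢
      exact Or.inl ⟨hc1, rfl⟩
    · rw [if_neg hc1] at he ⊢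
      by_cases hc2 : interB ρ σ i < interB ρ σ (i+1)
      · rw [if_pos hc2] at he ⊢
        exact Or.inr ⟨i, rfl, hc2, hc1, rfl⟩
      · rw [if_neg hc2] at he
        omega

lemma AData.inc_vals (H : AData ρ σ n N3) {j : ℕ}
    (hc : interB ρ σ j < interB ρ σ (j+1)) :
    phiB (interB ρ σ) j = interB ρ σ j + 1 ∧
    phiB (interB ρ σ) (j+1) = interB ρ σ j + 1 := by
  have hg := H.good
  have hno : ¬ interB ρ σ (j+1) < interB ρ σ (j+2) := hg.no_adj hc
  have hstep := hg.step hc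
  constructor
  · match j with
    | 0 =>
      rw [hg.val0, if_pos hc]
    | (i+1) =>
      rw [hg.val i, if_pos hc]
  · rw [hg.val j, if_neg hno, if_pos hc]
    omega

/-- Multiplicity of a positive even value in the image is even. -/
lemma AData.mult (H : AData ρ σ n N3) (a : ℕ) (hpos : 0 < a) (hev : Even a) :
    Even ({i | (phiB (interB ρ σ) i).toNat = a}.ncard) := by
  classical
  have hg := H.good
  set T : Set ℕ := {j | interB ρ σ j < interB ρ σ (j+1) ∧ interB ρ σ j + 1 = (a : ℤ)} with hT
  have hS : {i | (phiB (interB ρ σ) i).toNat = a} = T ∪ (fun x => x + 1) '' T := by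
    ext j
    simp only [Set.mem_setOf_eq, Set.mem_union, Set.mem_image, hT]
    constructor
    · intro hj
      have hnn := H.nonneg j
      have hval : phiB (interB ρ σ) j = (a : ℤ) := by omega
      have heven : phiB (interB ρ σ) j % 2 = 0 := by
        rw [hval]
        obtain ⟨b, hb⟩ := hev
        omega
      rcases H.merged heven with ⟨hc, hv⟩ | ⟨i, hji, hc, hnc, hv⟩
      · exact Or.inl ⟨hc, by omega⟩
      · right
        refine ⟨i, ⟨hc, ?_⟩, hji.symm⟩
        have hstep := hg.step hc
        rw [hji] at hval hv
        omega
    · rintro (⟨hc, hv⟩ | ⟨i, ⟨hc, hv⟩, hij⟩)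
      · have := (H.inc_vals hc).1
        omega
      · subst hij
        have := (H.inc_vals hc).2
        omega
  have hTfin : T.Finite := by
    apply Set.Finite.subset (Set.finite_Iio N3)
    intro j hj
    simp only [hT, Set.mem_setOf_eq] at hj
    simp only [Set.mem_Iio]
    by_contra hle
    have t1 := H.tail (show N3 ≤ j by omega)
    have t2 := H.tail (show N3 ≤ j+1 by omega)
    have : j % 2 = 0 ∨ j % 2 = 1 := by omega
    rcases this with h | h
    · rw [if_pos h] at t1
      rw [if_neg (by omega : ¬ (j+1) % 2 = 0)] at t2
      omega
    · rw [if_neg (by omega : ¬ j % 2 = 0)] at t1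
      rw [if_pos (by omega : (j+1) % 2 = 0)] at t2
      omega
  have hdisj : Disjoint T ((fun x => x + 1) '' T) := by
    rw [Set.disjoint_left]
    rintro j hjT ⟨i, hiT, hij⟩
    simp only [hT, Set.mem_setOf_eq] at hjT hiT
    subst hij
    exact hg.no_adj hiT.1 hjT.1
  rw [hS, Set.ncard_union_eq hdisj hTfin (hTfin.image _),
    Set.ncard_image_of_injective _ (add_left_injective 1)]
  exact ⟨T.ncard, by omega⟩

lemma psum_toNat {f : ℕ → ℤ} (hf : ∀ i, 0 ≤ f i) (k : ℕ) :
    ((psum (fun j => (f j).toNat) k : ℕ) : ℤ) = zsum f k := by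
  induction k with
  | zero => rfl
  | succ k ih =>
    rw [psum_succ, zsum_succ, ← ih]
    push_cast
    rw [Int.toNat_of_nonneg (hf k)]

/-- Part 2: the image of a B-distinguished bipartition lies in `P^B_{2n+1}`. -/
lemma AData.part2 (H : AData ρ σ n N3) :
    IsPBN n (fun j => (PhiB ρ σ j).toNat) := by
  have hnn : ∀ i, 0 ≤ phiB (interB ρ σ) i := H.nonneg
  refine ⟨fun i => ?_, ⟨2 * N3 + 2, fun i hi => ?_, ?_⟩, fun a hpos hev => ?_⟩
  · exact Int.toNat_le_toNat (H.anti i)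
  · show (phiB (interB ρ σ) i).toNat = 0
    rw [H.tail_zero (show N3 + 1 ≤ i by omega)]
    rfl
  · have h1 := psum_toNat hnn (2 * N3 + 2)
    have h2 := H.sum
    show psum (fun j => (phiB (interB ρ σ) j).toNat) (2*N3+2) = 2 * n + 1
    omega
  · exact H.mult a hpos hev

end ASide
section ASide2

lemma GoodSeq.val_cases {π : ℕ → ℤ} (h : GoodSeq π) (j : ℕ) :
    phiB π j = π j ∨ phiB π j = π j + 1 ∨ phiB π j = π j - 1 := by
  match j with
  | 0 => rw [h.val0]; split_ifs <;> omega
  | (i+1) => rw [h.val i]; split_ifs <;> omega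

variable {ρ σ : ℕ → ℕ} {n N3 : ℕ}

/-- The image partition, as a sequence of naturals. -/
noncomputable def lamB (ρ σ : ℕ → ℕ) : ℕ → ℕ := fun j => (phiB (interB ρ σ) j).toNat

lemma AData.lam_partition (H : AData ρ σ n N3) : IsPartition (lamB ρ σ) :=
  fun i => Int.toNat_le_toNat (H.anti i)

lemma AData.lam_tail (H : AData ρ σ n N3) : ∀ i, 2*N3+2 ≤ i → lamB ρ σ i = 0 := by
  intro i hi
  unfold lamB
  rw [H.tail_zero (show N3 + 1 ≤ i by omega)]
  rfl

lemma AData.lam_cast (H : AData ρ σ n N3) (j : ℕ) :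
    ((lamB ρ σ j : ℕ) : ℤ) = phiB (interB ρ σ) j :=
  Int.toNat_of_nonneg (H.nonneg j)

/-- Claim B: for an even entry of the image, the run-offset parity detects
whether the index is the first element of its merged pair. -/
lemma AData.claimB (H : AData ρ σ n N3) :
    ∀ j, lamB ρ σ j % 2 = 0 →
      ((j - runStart (lamB ρ σ) j) % 2 = 0 ↔ interB ρ σ j < interB ρ σ (j+1)) := by
  have hg := H.good
  have hdL := H.lam_partition
  have hNL := H.lam_tail
  intro j
  induction j using Nat.strong_induction_on with
  | _ j IH =>
  intro hev
  have hcast := H.lam_cast j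
  have hevz : phiB (interB ρ σ) j % 2 = 0 := by omega
  have hs_le := runStart_le hdL hNL j
  rcases Nat.eq_or_lt_of_le hs_le with heq | hlt
  · have hLHS : (j - runStart (lamB ρ σ) j) % 2 = 0 := by omega
    rcases H.merged hevz with ⟨hc, _⟩ | ⟨i, hji, hc, hnc, hv⟩
    · exact iff_of_true hLHS hc
    · exfalso
      have hvi := (H.inc_vals hc).1
      have hvj := (H.inc_vals hc).2
      have hlam : lamB ρ σ i = lamB ρ σ (i+1) := by
        unfold lamB
        rw [hvi, hvj]
      have hlam' : lamB ρ σ i = lamB ρ σ j := by rw [hji]; exact hlam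
      have hcongr := runStart_congr hlam'
      have := runStart_le hdL hNL i
      omega
  · obtain ⟨i, rfl⟩ : ∃ i, j = i + 1 := ⟨j - 1, by omega⟩
    have hmem : lamB ρ σ i = lamB ρ σ (i+1) := by
      have h1 : lamB ρ σ (i+1) ≤ lamB ρ σ i := hdL i
      have h2 : lamB ρ σ i ≤ lamB ρ σ (runStart (lamB ρ σ) (i+1)) :=
        anti_of hdL (by omega)
      have h3 : lamB ρ σ (runStart (lamB ρ σ) (i+1)) = lamB ρ σ (i+1) :=
        l_runStart hdL hNL (i+1)
      omega
    have hcongr : runStart (lamB ρ σ) i = runStart (lamB ρ σ) (i+1) :=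
      runStart_congr hmem
    have hievz : lamB ρ σ i % 2 = 0 := by omega
    have IHi := IH i (by omega) hievz
    have hs_le_i := runStart_le hdL hNL i
    by_cases hci : interB ρ σ i < interB ρ σ (i+1)
    · have hno : ¬ interB ρ σ (i+1) < interB ρ σ (i+2) := hg.no_adj hci
      have hoff : (i - runStart (lamB ρ σ) i) % 2 = 0 := IHi.mpr hci
      exact iff_of_false (by omega) (by rw [(rfl : i+1+1 = i+2)]; exact hno)
    · have hoff : ¬ (i - runStart (lamB ρ σ) i) % 2 = 0 := fun hc => hci (IHi.mp hc)
      have hcast1 := H.lam_cast (i+1)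
      have hevz1 : phiB (interB ρ σ) (i+1) % 2 = 0 := by omega
      rcases H.merged hevz1 with ⟨hc, _⟩ | ⟨i', hji', hc, hnc, _⟩
      · exact iff_of_true (by omega) hc
      · exfalso
        have : i' = i := by omega
        subst this
        exact hci hc

/-- Part 4: `Φ̂^B ∘ Φ^B = id` on `Q_n^B`. -/
lemma AData.part4 (H : AData ρ σ n N3) (i : ℕ) :
    hphiB (lamB ρ σ) i = interleave ρ σ i := by
  have hg := H.good
  have hdL := H.lam_partition
  have hNL := H.lam_tail
  have hcast := H.lam_cast i
  have hIB := interB_eval ρ σ i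
  have hs_le := runStart_le hdL hNL i
  by_cases hev : lamB ρ σ i % 2 = 0
  · have hevz : phiB (interB ρ σ) i % 2 = 0 := by omega
    by_cases h0 : lamB ρ σ i = 0
    · -- zero value
      have hπ0 : phiB (interB ρ σ) i = 0 := by omega
      have hival : interleave ρ σ i = 0 := by
        rcases H.merged hevz with ⟨hc, hv⟩ | ⟨i', hji, hc, hnc, hv⟩
        · by_cases hp : i % 2 = 0
          · rw [if_pos hp] at hIB; omega
          · rw [if_neg hp] at hIB; omega
        · subst hji
          have hstep := hg.step hc
          have hIB' := interB_eval ρ σ i'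
          have hvi' := (H.inc_vals hc).1
          by_cases hp : i' % 2 = 0
          · rw [if_pos hp] at hIB'
            omega
          · rw [if_neg hp] at hIB'
            rw [if_pos (by omega : (i'+1) % 2 = 0)] at hIB
            omega
      have hPBN : IsPBN n (lamB ρ σ) := H.part2
      obtain ⟨hdL', ⟨NL, hNL', hsL⟩, hmL⟩ := hPBN
      have hodds : Odd (runStart (lamB ρ σ) i) := by
        have hrs : runStart (lamB ρ σ) i = {j | 0 < lamB ρ σ j}.ncard := by
          unfold runStart
          rw [h0]
        rw [hrs]
        exact odd_npos hdL' hNL' hsL hmL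
      unfold hphiB
      rw [if_neg (by rw [h0]; decide), if_pos hodds, h0, hival]
    · -- positive even value
      have hkey := H.claimB i hev
      by_cases hinc : interB ρ σ i < interB ρ σ (i+1)
      · have hoff : (i - runStart (lamB ρ σ) i) % 2 = 0 := hkey.mpr hinc
        have hval : phiB (interB ρ σ) i = interB ρ σ i + 1 := (H.inc_vals hinc).1
        unfold hphiB
        rw [if_neg (by rw [Nat.odd_iff]; omega)]
        by_cases hso : Odd (runStart (lamB ρ σ) i)
        · rw [if_pos hso]
          rw [Nat.odd_iff] at hso
          rw [if_neg (by omega : ¬ i % 2 = 0)] at hIB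
          omega
        · rw [if_neg hso, if_pos (by rw [Nat.even_iff]; omega)]
          rw [Nat.not_odd_iff_even, Nat.even_iff] at hso
          rw [if_pos (by omega : i % 2 = 0)] at hIB
          omega
      · have hoff : ¬ (i - runStart (lamB ρ σ) i) % 2 = 0 := fun hc => hinc (hkey.mp hc)
        rcases H.merged hevz with ⟨hc, hv⟩ | ⟨i', hji, hc, hnc, hv⟩
        · exact absurd hc hinc
        · unfold hphiB
          rw [if_neg (by rw [Nat.odd_iff]; omega)]
          by_cases hso : Odd (runStart (lamB ρ σ) i)
          · rw [if_pos hso]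
            rw [Nat.odd_iff] at hso
            rw [if_pos (by omega : i % 2 = 0)] at hIB
            omega
          · rw [if_neg hso, if_neg (by rw [Nat.even_iff]; omega)]
            rw [Nat.not_odd_iff_even, Nat.even_iff] at hso
            rw [if_neg (by omega : ¬ i % 2 = 0)] at hIB
            omega
  · -- odd value: not merged
    have hval : phiB (interB ρ σ) i = interB ρ σ i := by
      have hp := hg.1 i
      rcases hg.val_cases i with h | h | h <;> omega
    unfold hphiB
    rw [if_pos (by rw [Nat.odd_iff]; omega)]
    by_cases hpar : Even i
    · rw [if_pos hpar]
      rw [Nat.even_iff] at hpar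
      rw [if_pos hpar] at hIB
      omega
    · rw [if_neg hpar]
      rw [Nat.not_even_iff_odd, Nat.odd_iff] at hpar
      rw [if_neg (by omega : ¬ i % 2 = 0)] at hIB
      omega

end ASide2
/-- `Φ^B(Φ̂^B(λ)) = λ` for `λ ∈ P^B_{2n+1}`, and the posets
`Q_n^B` and `P^B_{2n+1}` are isomorphic via the mutually inverse
order-preserving maps `Φ^B` and `Φ̂^B`. -/
theorem QB_PB_order_iso (n : ℕ) :
    (∀ l : ℕ → ℕ, IsPBN n l →
      ∀ i, phiB (interB (fun j => hphiB l (2 * j)) (fun j => hphiB l (2 * j + 1))) i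
        = (l i : ℤ)) ∧
    (∀ ρ σ : ℕ → ℕ, IsBipartition n ρ σ → QB ρ σ →
      IsPBN n (fun j => (PhiB ρ σ j).toNat)) ∧
    (∀ l : ℕ → ℕ, IsPBN n l →
      IsBipartition n (fun j => hphiB l (2 * j)) (fun j => hphiB l (2 * j + 1)) ∧
      QB (fun j => hphiB l (2 * j)) (fun j => hphiB l (2 * j + 1))) ∧
    (∀ ρ σ : ℕ → ℕ, IsBipartition n ρ σ → QB ρ σ →
      ∀ i, hphiB (fun j => (PhiB ρ σ j).toNat) i = interleave ρ σ i) ∧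
    (∀ ρ σ μ ν : ℕ → ℕ, IsBipartition n ρ σ → QB ρ σ →
      IsBipartition n μ ν → QB μ ν →
      (BiLE ρ σ μ ν ↔ ZDominates (PhiB μ ν) (PhiB ρ σ))) := by
  have mkPB : ∀ l : ℕ → ℕ, IsPBN n l → ∃ N, PBData l N n := by
    rintro l ⟨hd, ⟨N, hN, hsum⟩, hmult⟩
    exact ⟨N, ⟨hd, hN, hsum, hmult⟩⟩
  have mkA : ∀ ρ σ : ℕ → ℕ, IsBipartition n ρ σ → QB ρ σ → ∃ N3, AData ρ σ n N3 := by
    rintro ρ σ ⟨hρ, hσ, ⟨N3, hN3, hps⟩⟩ hq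
    exact ⟨N3, ⟨hρ, hσ, hq, hN3, hps⟩⟩
  refine ⟨?_, ?_, ?_, ?_, ?_⟩
  · intro l hl i
    obtain ⟨N, H⟩ := mkPB l hl
    exact H.part1 i
  · intro ρ σ hbi hq
    obtain ⟨N3, H⟩ := mkA ρ σ hbi hq
    exact H.part2
  · intro l hl
    obtain ⟨N, H⟩ := mkPB l hl
    exact H.part3
  · intro ρ σ hbi hq
    obtain ⟨N3, H⟩ := mkA ρ σ hbi hq
    exact H.part4
  · intro ρ σ μ ν h1 h2 h3 h4
    obtain ⟨N3, Hρσ⟩ := mkA ρ σ h1 h2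
    obtain ⟨N4, Hμν⟩ := mkA μ ν h3 h4
    rw [bile_iff_zdom]
    exact dom_iff Hρσ.good Hμν.good
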